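/- Let N₁ ≤ N₂ be integers and set N* = max(|N₁|, |N₂|). Let h, g : ℤ → ℂ be sequences supported in {N₁, …, N₂}. Suppose ψ : ℕ → ℕ → (ℝ → ℂ) is a family of functions such that the support of ψ 0 0 is contained in [N₁, N₂], and for all j ∈ ℕ and all p with 0 ≤ p < 2^j: ψ (j+1) (2p) (t) = Σ_{n ∈ ℤ} h(n) · ψ j p (t − 2^j n) and ψ (j+1) (2p+1) (t) = Σ_{n ∈ ℤ} g(n) · ψ j p (t − 2^j n) for all t ∈ ℝ. Then for every j ∈ ℕ and every p with 0 ≤ p < 2^j, the support of ψ j p is contained in the interval [−2^j (N*+1), 2^j (N*+1)]. -/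
import Mathlib

lemma stmt3_aux (N₁ N₂ Nstar : ℤ) (hNstar : Nstar = max |N₁| |N₂|)
    (c : ℤ → ℂ) (hc : Function.support c ⊆ Set.Icc N₁ N₂)
    (f : ℝ → ℂ) (j : ℕ)
    (hf : Function.support f ⊆
        Set.Icc (-(2 ^ j * ((Nstar : ℝ) + 1))) (2 ^ j * ((Nstar : ℝ) + 1)))
    (F : ℝ → ℂ) (hF : ∀ t, F t = ∑ᶠ n : ℤ, c n * f (t - 2 ^ j * n)) :
    Function.support F ⊆
      Set.Icc (-(2 ^ (j + 1) * ((Nstar : ℝ) + 1))) (2 ^ (j + 1) * ((Nstar : ℝ) + 1)) := by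
  intro t ht
  have hFt : F t ≠ 0 := ht
  rw [hF] at hFt
  obtain ⟨n, hn⟩ : ∃ n : ℤ, c n * f (t - 2 ^ j * n) ≠ 0 := by
    by_contra hcon
    push_neg at hcon
    exact hFt (by rw [finsum_congr hcon, finsum_zero])
  have hcn : c n ≠ 0 := fun hz => hn (by rw [hz, zero_mul])
  have hfn : f (t - 2 ^ j * n) ≠ 0 := fun hz => hn (by rw [hz, mul_zero])
  have hnI : n ∈ Set.Icc N₁ N₂ := hc hcn
  have habs : |n| ≤ Nstar := by
    rw [hNstar, abs_le]
    constructor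
    · calc -(max |N₁| |N₂|) ≤ -|N₁| := by simp [le_max_left]
        _ ≤ N₁ := neg_abs_le N₁
        _ ≤ n := hnI.1
    · calc n ≤ N₂ := hnI.2
        _ ≤ |N₂| := le_abs_self N₂
        _ ≤ max |N₁| |N₂| := le_max_right _ _
  have hNs0 : (0 : ℤ) ≤ Nstar := le_trans (abs_nonneg n) habs
  have habsR : |(n : ℝ)| ≤ (Nstar : ℝ) := by
    rw [← Int.cast_abs]; exact_mod_cast habs
  have hNs0R : (0 : ℝ) ≤ (Nstar : ℝ) := by exact_mod_cast hNs0
  have hmem := hf hfn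
  rw [Set.mem_Icc] at hmem ⊢
  have hP : (0 : ℝ) < 2 ^ j := by positivity
  have h1 : -(2 ^ j * ((Nstar : ℝ) + 1)) ≤ t - 2 ^ j * n := hmem.1
  have h2 : t - 2 ^ j * n ≤ 2 ^ j * ((Nstar : ℝ) + 1) := hmem.2
  have hn1 : -(Nstar : ℝ) ≤ (n : ℝ) := neg_le_of_abs_le habsR
  have hn2 : (n : ℝ) ≤ (Nstar : ℝ) := le_of_abs_le habsR
  have hpow : (2 : ℝ) ^ (j + 1) = 2 * 2 ^ j := by ring
  constructor
  · rw [hpow]; nlinarith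
  · rw [hpow]; nlinarith

/-- Lemma 2 of the paper: support of wavelet packet functions. -/
theorem stmt_3 (N₁ N₂ : ℤ) (hN : N₁ ≤ N₂) (Nstar : ℤ) (hNstar : Nstar = max |N₁| |N₂|)
    (h g : ℤ → ℂ)
    (hh : Function.support h ⊆ Set.Icc N₁ N₂)
    (hg : Function.support g ⊆ Set.Icc N₁ N₂)
    (ψ : ℕ → ℕ → ℝ → ℂ)
    (hψ0 : Function.support (ψ 0 0) ⊆ Set.Icc (N₁ : ℝ) (N₂ : ℝ))
    (hrec : ∀ j p : ℕ, p < 2 ^ j →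
      (∀ t : ℝ, ψ (j + 1) (2 * p) t = ∑ᶠ n : ℤ, h n * ψ j p (t - 2 ^ j * n)) ∧
      (∀ t : ℝ, ψ (j + 1) (2 * p + 1) t = ∑ᶠ n : ℤ, g n * ψ j p (t - 2 ^ j * n))) :
    ∀ j p : ℕ, p < 2 ^ j →
      Function.support (ψ j p) ⊆
        Set.Icc (-(2 ^ j * ((Nstar : ℝ) + 1))) (2 ^ j * ((Nstar : ℝ) + 1)) := by
  intro j
  induction j with
  | zero =>
    intro p hp
    interval_cases p
    intro t ht
    have := hψ0 ht
    rw [Set.mem_Icc] at this ⊢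
    have h1 : -(Nstar : ℝ) ≤ (N₁ : ℝ) := by
      have : -Nstar ≤ N₁ := by
        rw [hNstar]
        calc -(max |N₁| |N₂|) ≤ -|N₁| := by simp [le_max_left]
          _ ≤ N₁ := neg_abs_le N₁
      exact_mod_cast this
    have h2 : (N₂ : ℝ) ≤ (Nstar : ℝ) := by
      have : N₂ ≤ Nstar := hNstar ▸ le_trans (le_abs_self N₂) (le_max_right _ _)
      exact_mod_cast this
    constructor
    · simp only [pow_zero, one_mul]; linarith [this.1]
    · simp only [pow_zero, one_mul]; linarith [this.2]
  | succ j ih =>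
    intro p hp
    rcases Nat.even_or_odd p with ⟨q, hq⟩ | ⟨q, hq⟩
    · have hq2 : p = 2 * q := by omega
      have hqlt : q < 2 ^ j := by
        rw [hq2, pow_succ] at hp; omega
      subst hq2
      exact stmt3_aux N₁ N₂ Nstar hNstar h hh (ψ j q) j (ih q hqlt) _ (hrec j q hqlt).1
    · have hqlt : q < 2 ^ j := by
        rw [hq, pow_succ] at hp; omega
      subst hq
      exact stmt3_aux N₁ N₂ Nstar hNstar g hg (ψ j q) j (ih q hqlt) _ (hrec j q hqlt).2
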